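/- Every finitely generated free group is Hopfian: any surjective group endomorphism of a finitely generated free group is an isomorphism. -/

import Mathlib

open Finset in
/-- Any injection-on-a-finset of a finite type extends to a permutation. -/
lemma exists_perm_eqOn {α : Type*} [Fintype α] [DecidableEq α] (s : Finset α)
    (f : α → α) (hinj : Set.InjOn f s) :
    ∃ π : Equiv.Perm α, ∀ x ∈ s, π x = f x := by
  classical
  set t : Finset α := s.image f with ht
  have hbij : Function.Bijective
      (fun x : {x // x ∈ s} => (⟨f x, Finset.mem_image_of_mem f x.2⟩ : {y // y ∈ t})) := by
    constructor
    · rintro ⟨x, hx⟩ ⟨y, hy⟩ h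
      simp only [Subtype.mk.injEq] at h ⊢
      exact hinj hx hy h
    · rintro ⟨y, hy⟩
      obtain ⟨x, hx, rfl⟩ := Finset.mem_image.1 hy
      exact ⟨⟨x, hx⟩, rfl⟩
  let e₁ : {x // x ∈ s} ≃ {y // y ∈ t} := Equiv.ofBijective _ hbij
  have hcard : Fintype.card {x // ¬ x ∈ s} = Fintype.card {y // ¬ y ∈ t} := by
    have h1 : Fintype.card {x // x ∈ s} = Fintype.card {y // y ∈ t} :=
      Fintype.card_congr e₁
    have h2 := Fintype.card_subtype_compl (fun x => x ∈ s)
    have h3 := Fintype.card_subtype_compl (fun y => y ∈ t)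
    omega
  have e₂ : {x // ¬ x ∈ s} ≃ {y // ¬ y ∈ t} := Fintype.equivOfCardEq hcard
  refine ⟨((Equiv.sumCompl (· ∈ s)).symm.trans
    ((e₁.sumCongr e₂).trans (Equiv.sumCompl (· ∈ t)))), fun x hx => ?_⟩
  simp only [Equiv.trans_apply, Equiv.sumCompl_symm_apply_of_pos hx,
    Equiv.sumCongr_apply, Sum.map_inl, Equiv.sumCompl_apply_inl, e₁,
    Equiv.ofBijective_apply]

namespace FreeGroupHopfianAux

variable {ι : Type*} [DecidableEq ι]

/-- Adjacent letters in a reduced word (`toWord`) never cancel. -/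
lemma no_adjacent (w : FreeGroup ι) {k : ℕ} (h : k + 1 < w.toWord.length)
    {x : ι} {b : Bool} (h1 : w.toWord[k] = (x, b)) (h2 : w.toWord[k+1] = (x, !b)) :
    False := by
  apply FreeGroup.reduce.not (L₁ := w.toWord) (L₂ := w.toWord.take k)
    (L₃ := w.toWord.drop (k+2)) (x := x) (b := b)
  rw [FreeGroup.reduce_toWord]
  conv_lhs => rw [← List.take_append_drop k w.toWord]
  rw [List.drop_eq_getElem_cons (l := w.toWord) (i := k) (by omega),
    List.drop_eq_getElem_cons (l := w.toWord) (i := k + 1) (by omega), h1, h2]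

variable (w : FreeGroup ι)

/-- The partially-defined action of the generator `i` on positions `0, …, n`:
if the `p`-th letter of the reduced word of `w` is `(i, false)` we move `p ↦ p+1`,
and if the `(p-1)`-st letter is `(i, true)` we move `p ↦ p-1`. -/
noncomputable def pre (i : ι) (p : Fin (w.toWord.length + 1)) : Fin (w.toWord.length + 1) :=
  if h : ∃ hp : (p : ℕ) < w.toWord.length, w.toWord[(p : ℕ)] = (i, false) then
    ⟨(p : ℕ) + 1, by obtain ⟨hp, -⟩ := h; omega⟩
  else if h2 : ∃ hp : (p : ℕ) - 1 < w.toWord.length,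
      0 < (p : ℕ) ∧ w.toWord[(p : ℕ) - 1] = (i, true) then
    ⟨(p : ℕ) - 1, by have := p.isLt; omega⟩
  else p

/-- The set where `pre` is "defined". -/
noncomputable def src (i : ι) : Finset (Fin (w.toWord.length + 1)) :=
  Finset.univ.filter fun p =>
    (∃ hp : (p : ℕ) < w.toWord.length, w.toWord[(p : ℕ)] = (i, false)) ∨
    (∃ hp : (p : ℕ) - 1 < w.toWord.length, 0 < (p : ℕ) ∧ w.toWord[(p : ℕ) - 1] = (i, true))

lemma pre_injOn (i : ι) : Set.InjOn (pre w i) (src w i) := by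
  rintro ⟨p, hp⟩ hps ⟨q, hq⟩ hqs heq
  simp only [src, Finset.coe_filter, Set.mem_setOf_eq, Finset.mem_univ, true_and] at hps hqs
  unfold pre at heq
  -- analyze the four cases
  rcases hps with hp1 | hp2
  · rcases hqs with hq1 | hq2
    · rw [dif_pos hp1, dif_pos hq1] at heq
      simpa [Fin.ext_iff] using heq
    · rw [dif_pos hp1] at heq
      by_cases hq1 : ∃ hp : q < w.toWord.length, w.toWord[q] = (i, false)
      · rw [dif_pos hq1] at heq
        simpa [Fin.ext_iff] using heq
      · rw [dif_neg hq1, dif_pos hq2] at heq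
        -- p + 1 = q - 1 with letters (i,false) at p and (i,true) at q-1 = p+1
        exfalso
        obtain ⟨hplt, hpl⟩ := hp1
        obtain ⟨hqlt, hq0, hql⟩ := hq2
        have hpq : p + 1 = q - 1 := by simpa [Fin.ext_iff] using heq
        exact no_adjacent w (k := p) (by omega) hpl (by
          have : q - 1 = p + 1 := hpq.symm
          simpa [this] using hql)
  · rcases hqs with hq1 | hq2
    · rw [dif_pos hq1] at heq
      by_cases hp1 : ∃ hp : p < w.toWord.length, w.toWord[p] = (i, false)
      · rw [dif_pos hp1] at heq
        simpa [Fin.ext_iff] using heq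
      · rw [dif_neg hp1, dif_pos hp2] at heq
        exfalso
        obtain ⟨hplt, hp0, hpl⟩ := hp2
        obtain ⟨hqlt, hql⟩ := hq1
        have hpq : p - 1 = q + 1 := by simpa [Fin.ext_iff] using heq
        exact no_adjacent w (k := q) (by omega) hql (by
          have : p - 1 = q + 1 := hpq
          simpa [this] using hpl)
    · by_cases hp1 : ∃ hp : p < w.toWord.length, w.toWord[p] = (i, false)
      · -- both rules at p: contradiction with reducedness
        exfalso
        obtain ⟨hplt, hpl⟩ := hp1
        obtain ⟨hplt', hp0, hpl'⟩ := hp2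
        exact no_adjacent w (k := p - 1) (by omega) hpl' (by
          have : p - 1 + 1 = p := by omega
          simpa [this] using hpl)
      · by_cases hq1 : ∃ hp : q < w.toWord.length, w.toWord[q] = (i, false)
        · exfalso
          obtain ⟨hqlt, hql⟩ := hq1
          obtain ⟨hqlt', hq0, hql'⟩ := hq2
          exact no_adjacent w (k := q - 1) (by omega) hql' (by
            have : q - 1 + 1 = q := by omega
            simpa [this] using hql)
        · rw [dif_neg hp1, dif_pos hp2, dif_neg hq1, dif_pos hq2] at heq
          obtain ⟨_, hp0, _⟩ := hp2
          obtain ⟨_, hq0, _⟩ := hq2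
          have : p - 1 = q - 1 := by simpa [Fin.ext_iff] using heq
          simp only [Fin.mk.injEq]
          omega

/-- The permutation associated to the generator `i`. -/
noncomputable def perm (i : ι) : Equiv.Perm (Fin (w.toWord.length + 1)) :=
  (exists_perm_eqOn (src w i) (pre w i) (pre_injOn w i)).choose

lemma perm_spec (i : ι) : ∀ p ∈ src w i, perm w i p = pre w i p :=
  (exists_perm_eqOn (src w i) (pre w i) (pre_injOn w i)).choose_spec

/-- If the letter at position `k` is `(i, true)`, then `perm i` moves `k+1` to `k`. -/
lemma perm_apply_of_true {i : ι} {k : ℕ} (hk : k < w.toWord.length)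
    (hl : w.toWord[k] = (i, true)) :
    perm w i ⟨k + 1, by omega⟩ = ⟨k, by omega⟩ := by
  have hmem : (⟨k + 1, by omega⟩ : Fin (w.toWord.length + 1)) ∈ src w i := by
    simp only [src, Finset.mem_filter, Finset.mem_univ, true_and]
    right
    exact ⟨by simp; omega, by simp, by simpa using hl⟩
  rw [perm_spec w i _ hmem]
  unfold pre
  rw [dif_neg, dif_pos]
  · simp
  · exact ⟨by simp; omega, by simp, by simpa using hl⟩
  · rintro ⟨h1, h2⟩
    simp only at h2
    exact no_adjacent w (k := k) (by simpa using h1) hl (by simpa using h2)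

/-- If the letter at position `k` is `(i, false)`, then `perm i` moves `k` to `k+1`. -/
lemma perm_apply_of_false {i : ι} {k : ℕ} (hk : k < w.toWord.length)
    (hl : w.toWord[k] = (i, false)) :
    perm w i ⟨k, by omega⟩ = ⟨k + 1, by omega⟩ := by
  have hmem : (⟨k, by omega⟩ : Fin (w.toWord.length + 1)) ∈ src w i := by
    simp only [src, Finset.mem_filter, Finset.mem_univ, true_and]
    left
    exact ⟨by simpa using hk, by simpa using hl⟩
  rw [perm_spec w i _ hmem]
  unfold pre
  rw [dif_pos ⟨by simpa using hk, by simpa using hl⟩]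

/-- The homomorphism to a finite symmetric group detecting `w`. -/
noncomputable def detect : FreeGroup ι →* Equiv.Perm (Fin (w.toWord.length + 1)) :=
  FreeGroup.lift (perm w)

lemma detect_suffix : ∀ (m k : ℕ) (hk : k ≤ w.toWord.length), w.toWord.length - k = m →
    (List.prod ((w.toWord.drop k).map fun x : ι × Bool =>
        cond x.2 (perm w x.1) (perm w x.1)⁻¹)) ⟨w.toWord.length, by omega⟩
      = ⟨k, by omega⟩ := by
  intro m
  induction m with
  | zero =>
    intro k hk hm
    have : k = w.toWord.length := by omega
    subst this
    simp
  | succ m ih =>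
    intro k hk hm
    have hklt : k < w.toWord.length := by omega
    rw [List.drop_eq_getElem_cons (l := w.toWord) (i := k) hklt]
    rw [List.map_cons, List.prod_cons]
    have hrec := ih (k + 1) (by omega) (by omega)
    rcases hx : w.toWord[k] with ⟨i, b⟩
    cases b with
    | true =>
      simp only [Equiv.Perm.mul_apply, hx, cond_true, hrec]
      exact perm_apply_of_true w hklt hx
    | false =>
      simp only [Equiv.Perm.mul_apply, hx, cond_false, hrec]
      have := perm_apply_of_false w hklt hx
      rw [← this, Equiv.Perm.inv_def, Equiv.symm_apply_apply]

lemma detect_ne_one (hw : w ≠ 1) : detect w w ≠ 1 := by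
  have hlen : 0 < w.toWord.length := by
    rcases Nat.eq_zero_or_pos w.toWord.length with h | h
    · exact absurd (FreeGroup.toWord_eq_nil_iff.1 (List.length_eq_zero_iff.1 h)) hw
    · exact h
  have hcalc : detect w w ⟨w.toWord.length, by omega⟩ = ⟨0, by omega⟩ := by
    have hmk : detect w w = detect w (FreeGroup.mk w.toWord) := by
      rw [FreeGroup.mk_toWord]
    rw [hmk, detect, FreeGroup.lift_mk]
    simpa using detect_suffix w w.toWord.length 0 (by omega) (by omega)
  intro h
  rw [h] at hcalc
  simp only [Equiv.Perm.one_apply, Fin.mk.injEq] at hcalc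
  omega

end FreeGroupHopfianAux

/-- Free groups are residually finite, witnessed in symmetric groups. -/
theorem freeGroup_residually_finite {ι : Type*} (w : FreeGroup ι) (hw : w ≠ 1) :
    ∃ (n : ℕ) (ψ : FreeGroup ι →* Equiv.Perm (Fin n)), ψ w ≠ 1 := by
  letI := Classical.decEq ι
  exact ⟨_, FreeGroupHopfianAux.detect w, FreeGroupHopfianAux.detect_ne_one w hw⟩

/-- Finitely generated free groups are Hopfian: every surjective endomorphism of a
finitely generated free group is an isomorphism (i.e. bijective). -/
theorem freeGroup_hopfian {ι : Type*} [Finite ι]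
    (f : FreeGroup ι →* FreeGroup ι) (hf : Function.Surjective f) :
    Function.Bijective f := by
  classical
  refine ⟨?_, hf⟩
  rw [injective_iff_map_eq_one]
  intro w hwker
  by_contra hw
  obtain ⟨n, ψ, hψ⟩ := freeGroup_residually_finite w hw
  set P := Equiv.Perm (Fin n)
  have hfin : Finite (FreeGroup ι →* P) := by
    apply Finite.of_injective (fun φ : FreeGroup ι →* P => fun i : ι => φ (FreeGroup.of i))
    intro φ₁ φ₂ h
    exact FreeGroup.ext_hom _ _ fun a => congrFun h a
  have hTinj : Function.Injective (fun φ : FreeGroup ι →* P => φ.comp f) := by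
    intro φ₁ φ₂ h
    refine FreeGroup.ext_hom _ _ fun a => ?_
    obtain ⟨x, hx⟩ := hf (FreeGroup.of a)
    rw [← hx]
    exact DFunLike.congr_fun h x
  have hTsurj := Finite.injective_iff_surjective.1 hTinj
  obtain ⟨ψ', hψ'⟩ := hTsurj ψ
  apply hψ
  have : ψ w = ψ' (f w) := by rw [← hψ']; rfl
  rw [this, hwker, map_one]
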